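/- Soundness of rule H6: for every consistent architecture A, if none of the preconditions of rules H1–H5 holds at C_i for X or any X_k — i.e., A contains no Has_i(X̃), no Receive_{i,j} carrying X̃, no Compute_i(X̃ = T), no Spotcheck_{i,j}(X_k, E), and there is no Dep_i(X̃, {X̃^1,…,X̃^n}) whose input variables C_i can all fully obtain — then A ∈ S(Has_i^none(X̃)): every state reached by a trace compatible with A satisfies σ_i^v(X̃) = ⊥. -/

import Mathlib

namespace PrivacyArch

attribute [local instance] Classical.propDecidable

/-- Signature: the basic types of a privacy-architecture framework.
`Comp` is the set of components, `Var` the (possibly array) variables,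
`IVar` the index variables, `Fn` the function symbols, `Cst` the constants
and `Val` the values. -/
structure Sig : Type 1 where
  Comp : Type
  Var : Type
  IVar : Type
  Fn : Type
  Cst : Type
  Val : Type

/-- Indexes `K ::= k | Ck`: index variables or natural-number constants. -/
inductive Idx (S : Sig) : Type
  | ivar : S.IVar → Idx S
  | nat : ℕ → Idx S

/-- (Possibly indexed) variables `X̃ ::= X | X_K`. -/
inductive TVar (S : Sig) : Type
  | simple : S.Var → TVar S
  | idx : S.Var → Idx S → TVar S

/-- The underlying (base) variable of an `X̃`. -/
def TVar.base {S : Sig} : TVar S → S.Var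
  | .simple X => X
  | .idx X _ => X

/-- Terms `T ::= X̃ | Cx | F (T1, …, Tn) | ⊙F (X)`. -/
inductive Term (S : Sig) : Type
  | var : TVar S → Term S
  | cst : S.Cst → Term S
  | app : S.Fn → List (Term S) → Term S
  | iter : S.Fn → S.Var → Term S

/-- Relations `Rel ::= = | < | > | ≤ | ≥`. -/
inductive Rel : Type
  | eq | lt | gt | le | ge

/-- Primitive equations `Eq ::= T1 Rel T2`. -/
structure Eqn (S : Sig) : Type where
  lhs : Term S
  rel : Rel
  rhs : Term S

/-- Atomic properties stored in property states: equations and trust assertions. -/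
inductive PProp (S : Sig) : Type
  | eq : Eqn S → PProp S
  | trust : S.Comp → S.Comp → PProp S

/-- Equations of the privacy logic, closed under conjunction:
`Eq ::= T1 Rel T2 | Eq1 ∧ Eq2`. -/
inductive LEqn (S : Sig) : Type
  | atom : Eqn S → LEqn S
  | and : LEqn S → LEqn S → LEqn S

/-- Attestations `Att ::= Attest_i({Eq})`. -/
inductive Att (S : Sig) : Type
  | mk : S.Comp → List (Eqn S) → Att S

/-- Proof items `P ::= Att | Eq`. -/
inductive PItem (S : Sig) : Type
  | att : Att S → PItem S
  | eq : Eqn S → PItem S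

/-- Proofs `Pro ::= Proof_i({P})`. -/
inductive Pro (S : Sig) : Type
  | mk : S.Comp → List (PItem S) → Pro S

/-- Statements `S ::= Pro | Att`. -/
inductive Stmt (S : Sig) : Type
  | pro : Pro S → Stmt S
  | att : Att S → Stmt S

/-- Ground references to variables: a whole (simple or array) variable `X`,
or an array element `X_Ck` with `Ck ∈ ℕ`. -/
inductive Ref (S : Sig) : Type
  | var : S.Var → Ref S
  | elem : S.Var → ℕ → Ref S

/-- The underlying (base) variable of a reference. -/
def Ref.base {S : Sig} : Ref S → S.Var
  | .var X => X
  | .elem X _ => X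

/-- Variable states `State_V`: each variable denotes an array of fixed size
`Range X` (simple variables have `Range X = 1` and are stored at index `0`);
`none` is the undefined value ⊥. -/
def VState (S : Sig) : Type := S.Var → ℕ → Option S.Val

/-- A model fixes the interpretation of constants, functions (including the
iterated application `⊙F`), relations, the size `Range X` of each array, the
deductive systems `▷_i`, the dependence relations `Dep_i` and the internal
verification functions for proofs and attestations.  The deductive systems are
assumed to be able to derive their premises, to be monotone, closed under
conjunction and cut, and to derive some (trivially true) equation from any
property set. -/
structure Model (S : Sig) : Type 1 where
  cstI : S.Cst → S.Val
  funI : S.Fn → List S.Val → S.Val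
  iterI : S.Fn → List S.Val → S.Val
  relI : Rel → S.Val → S.Val → Prop
  Range : S.Var → ℕ
  /-- the deductive system `▷_i` of component `C_i` -/
  deduce : S.Comp → Set (PProp S) → LEqn S → Prop
  /-- the dependence relation `Dep_i` of component `C_i` -/
  dep : S.Comp → Ref S → Set (Ref S) → Prop
  /-- the proof-verification function of component `C_i` -/
  verifP : S.Comp → List (PItem S) → VState S → Prop
  /-- the attestation-verification function of component `C_i` -/
  verifA : S.Comp → List (Eqn S) → VState S → Prop
  deduce_mem : ∀ i P e, PProp.eq e ∈ P → deduce i P (.atom e)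
  deduce_mono : ∀ i P P' e, P ⊆ P' → deduce i P e → deduce i P' e
  deduce_and : ∀ i P e1 e2, deduce i P e1 → deduce i P e2 → deduce i P (.and e1 e2)
  deduce_cut : ∀ i P (E : Set (Eqn S)) e,
    (∀ e' ∈ E, deduce i P (.atom e')) → deduce i (PProp.eq '' E) e → deduce i P e
  deduce_ex : ∀ i P, ∃ e, deduce i P e

/-- The relations of the privacy architecture language (Table 2). -/
inductive ArchRel (S : Sig) : Type
  | has : S.Comp → TVar S → ArchRel S
  | receive : S.Comp → S.Comp → List (Stmt S) → List (TVar S) → ArchRel S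
  | compute : S.Comp → TVar S → Term S → ArchRel S
  | check : S.Comp → List (Eqn S) → ArchRel S
  | verifP : S.Comp → Pro S → ArchRel S
  | verifA : S.Comp → Att S → ArchRel S
  | spotcheck : S.Comp → S.Comp → S.Var → S.IVar → List (Eqn S) → ArchRel S
  | trust : S.Comp → S.Comp → ArchRel S

/-- An architecture is a finite set (here: list) of relations. -/
abbrev Arch (S : Sig) := List (ArchRel S)

/-- Events (Table 3): instantiations of the architecture relations carrying
concrete values for variables and integer indexes. -/
inductive Event (S : Sig) : Type
  | has : S.Comp → Ref S → (ℕ → S.Val) → Event S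
  | receive : S.Comp → S.Comp → List (Stmt S) → List (Ref S × (ℕ → S.Val)) → Event S
  | compute : S.Comp → Ref S → Term S → Event S
  | check : S.Comp → List (Eqn S) → Event S
  | verifP : S.Comp → Pro S → Event S
  | verifA : S.Comp → Att S → Event S
  | spotcheck : S.Comp → S.Comp → S.Var → ℕ → S.Val → List (Eqn S) → Event S

def Event.isCompute {S : Sig} : Event S → Prop
  | .compute _ _ _ => True
  | _ => False

/-- Instantiation of an `X̃` by an index environment, as a ground reference. -/
def instVar {S : Sig} (η : S.IVar → ℕ) : TVar S → Ref S
  | .simple X => .var X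
  | .idx X (.nat n) => .elem X n
  | .idx X (.ivar k) => .elem X (η k)

/-- Instantiation of an `X̃` by an index environment, inside terms. -/
def instTV {S : Sig} (η : S.IVar → ℕ) : TVar S → TVar S
  | .simple X => .simple X
  | .idx X (.nat n) => .idx X (.nat n)
  | .idx X (.ivar k) => .idx X (.nat (η k))

/-- Instantiation of the index variables of a term by integer values. -/
inductive InstTerm {S : Sig} (η : S.IVar → ℕ) : Term S → Term S → Prop
  | var (tv) : InstTerm η (.var tv) (.var (instTV η tv))
  | cst (c) : InstTerm η (.cst c) (.cst c)
  | app {f ts ts'} (hlen : ts.length = ts'.length)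
      (h : ∀ (p : ℕ) t t', ts[p]? = some t → ts'[p]? = some t' → InstTerm η t t') :
      InstTerm η (.app f ts) (.app f ts')
  | iter (f X) : InstTerm η (.iter f X) (.iter f X)

/-- `Inst ε α` (written `𝒞(ε, α)` in the paper): the event `ε` can be obtained
from the architecture relation `α` by adding specific values for variables and
instantiating index variables to integer values. -/
inductive Inst {S : Sig} : Event S → ArchRel S → Prop
  | has {i tv f} (η) : Inst (.has i (instVar η tv) f) (.has i tv)
  | receive {i j ss tvs rvs} (η) (hlen : tvs.length = rvs.length)
      (h : ∀ (p : ℕ) tv rv, tvs[p]? = some tv → rvs[p]? = some rv →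
        Prod.fst rv = instVar η tv) :
      Inst (.receive i j ss rvs) (.receive i j ss tvs)
  | compute {i tv T T'} (η) (hT : InstTerm η T T') :
      Inst (.compute i (instVar η tv) T') (.compute i tv T)
  | check {i E} : Inst (.check i E) (.check i E)
  | verifP {i p} : Inst (.verifP i p) (.verifP i p)
  | verifA {i a} : Inst (.verifA i a) (.verifA i a)
  | spotcheck {i j X k n V E} : Inst (.spotcheck i j X n V E) (.spotcheck i j X k E)

/-- Compatibility of a trace with an architecture (Definition 1): every event
other than a `compute` event instantiates an element of `A`, and there is at
most one spotcheck per pair of components. -/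
def Compatible {S : Sig} (A : Arch S) (θ : List (Event S)) : Prop :=
  (∀ e ∈ θ, ¬ e.isCompute → ∃ α ∈ A, Inst e α) ∧
  ∀ (a b : Fin θ.length) i j X n V E X' n' V' E', a ≠ b →
    θ.get a = Event.spotcheck i j X n V E →
    θ.get b = Event.spotcheck i j X' n' V' E' → False

/-- The default (ground) index environment used to evaluate event terms. -/
def eta0 (S : Sig) : S.IVar → ℕ := fun _ => 0

/-- Evaluation `ε(T, σ^v)` of a term in a variable state (partial: a term with
an undefined variable has no value). -/
inductive EvalTerm {S : Sig} (M : Model S) (η : S.IVar → ℕ) (w : VState S) :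
    Term S → S.Val → Prop
  | simple {X v} : w X 0 = some v → EvalTerm M η w (.var (.simple X)) v
  | idxN {X n v} : w X n = some v → EvalTerm M η w (.var (.idx X (.nat n))) v
  | idxI {X k v} : w X (η k) = some v → EvalTerm M η w (.var (.idx X (.ivar k))) v
  | cst (c) : EvalTerm M η w (.cst c) (M.cstI c)
  | app {f ts vs} (hlen : List.length ts = List.length vs)
      (h : ∀ (p : ℕ) t v, ts[p]? = some t → vs[p]? = some v → EvalTerm M η w t v) :
      EvalTerm M η w (.app f ts) (M.funI f vs)
  | iter {f X} {vals : ℕ → S.Val}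
      (h : ∀ k < M.Range X, w X k = some (vals k)) :
      EvalTerm M η w (.iter f X) (M.iterI f ((List.range (M.Range X)).map vals))

/-- Evaluation of an equation to `True` in a variable state. -/
def EvEq {S : Sig} (M : Model S) (η : S.IVar → ℕ) (w : VState S) (e : Eqn S) : Prop :=
  ∃ a b, EvalTerm M η w e.lhs a ∧ EvalTerm M η w e.rhs b ∧ M.relI e.rel a b

/-- Evaluation of a logic equation (conjunction of primitive equations). -/
def LEval {S : Sig} (M : Model S) (η : S.IVar → ℕ) (w : VState S) : LEqn S → Prop
  | .atom e => EvEq M η w e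
  | .and a b => LEval M η w a ∧ LEval M η w b

/-- Semantic implication `Eq1 ⇒ Eq2` between logic equations. -/
def LImp {S : Sig} (M : Model S) (e1 e2 : LEqn S) : Prop :=
  ∀ η w, LEval M η w e1 → LEval M η w e2

/-- Non-error component states: a variable state, the property state of known
properties, the property state of believed properties, and the set of
statements received so far. -/
structure OkState (S : Sig) : Type where
  v : VState S
  pk : Set (PProp S)
  pb : Set (PProp S)
  rcv : Set (Stmt S)

/-- Component states: `Error` or a non-error state. -/
inductive CState (S : Sig) : Type
  | error : CState S
  | ok : OkState S → CState S

/-- Global states: one state per component. -/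
def GState (S : Sig) : Type := S.Comp → CState S

/-- Update of a variable state at a reference (`σ^v_i[X̃/V]`). -/
noncomputable def updRef {S : Sig} (M : Model S) (w : VState S) :
    Ref S → (ℕ → S.Val) → VState S
  | .var X, f => fun Y k => if Y = X ∧ k < M.Range X then some (f k) else w Y k
  | .elem X n, f => fun Y k => if Y = X ∧ k = n then some (f 0) else w Y k

/-- Update of a global state at one component (`σ[σ_i / …]`). -/
noncomputable def upd {S : Sig} (σ : GState S) (i : S.Comp) (c : CState S) : GState S :=
  fun j => if j = i then c else σ j

/-- The term denoted by a ground reference. -/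
def refTerm {S : Sig} : Ref S → Term S
  | .var X => .var (.simple X)
  | .elem X n => .var (.idx X (.nat n))

/-- `σ^v_i(X̃)` does not contain any ⊥. -/
def NoBot {S : Sig} (M : Model S) (w : VState S) : Ref S → Prop
  | .var X => ∀ k < M.Range X, w X k ≠ none
  | .elem X n => w X n ≠ none

/-- `σ^v_i(X̃) = ⊥` (no part of the content of `X̃` is defined). -/
def AllBot {S : Sig} (M : Model S) (w : VState S) : Ref S → Prop
  | .var X => ∀ k < M.Range X, w X k = none
  | .elem X n => w X n = none

/-- At most one entry of `σ^v_i(X)` differs from ⊥. -/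
def AtMostOne {S : Sig} (M : Model S) (w : VState S) : Ref S → Prop
  | .var X => Set.Subsingleton {k | k < M.Range X ∧ w X k ≠ none}
  | .elem _ _ => True

/-- The initial state `Init^A`: empty variable states; the only information is
the trust properties specified by the architecture. -/
def Init {S : Sig} (A : Arch S) : GState S := fun i =>
  CState.ok ⟨fun _ _ => none,
    {p | ∃ j, p = PProp.trust i j ∧ ArchRel.trust i j ∈ A}, ∅, ∅⟩

/-- The semantics of events (Table 4), given as a step relation
`Step M ε σ σ'` (the event semantics is deterministic). -/
inductive Step {S : Sig} (M : Model S) : Event S → GState S → GState S → Prop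
  | has {σ i r f s} (h : σ i = CState.ok s) :
      Step M (.has i r f) σ (upd σ i (CState.ok ⟨updRef M s.v r f, s.pk, s.pb, s.rcv⟩))
  | receive {σ i j ss rvs s} (h : σ i = CState.ok s) :
      Step M (.receive i j ss rvs) σ
        (upd σ i (CState.ok ⟨rvs.foldl (fun w rv => updRef M w rv.1 rv.2) s.v,
          s.pk, s.pb, s.rcv ∪ {st | st ∈ ss}⟩))
  | compute {σ i r T s val} (h : σ i = CState.ok s)
      (hev : EvalTerm M (eta0 S) s.v T val) :
      Step M (.compute i r T) σ
        (upd σ i (CState.ok ⟨updRef M s.v r (fun _ => val),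
          insert (PProp.eq ⟨refTerm r, Rel.eq, T⟩) s.pk, s.pb, s.rcv⟩))
  | check_ok {σ i E s} (h : σ i = CState.ok s)
      (hE : ∀ e ∈ E, EvEq M (eta0 S) s.v e) :
      Step M (.check i E) σ
        (upd σ i (CState.ok ⟨s.v, s.pk ∪ {p | ∃ e ∈ E, p = PProp.eq e}, s.pb, s.rcv⟩))
  | check_err {σ i E s} (h : σ i = CState.ok s)
      (hE : ¬ ∀ e ∈ E, EvEq M (eta0 S) s.v e) :
      Step M (.check i E) σ (upd σ i CState.error)
  | verifP_ok {σ i j Ps s} (h : σ i = CState.ok s) (hv : M.verifP i Ps s.v) :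
      Step M (.verifP i (.mk j Ps)) σ
        (upd σ i (CState.ok ⟨s.v,
          s.pk ∪ {p | ∃ e, p = PProp.eq e ∧ (PItem.eq e ∈ Ps ∨
            ∃ j' E', PItem.att (.mk j' E') ∈ Ps ∧ e ∈ E' ∧ PProp.trust i j' ∈ s.pk)},
          s.pb, s.rcv⟩))
  | verifP_err {σ i j Ps s} (h : σ i = CState.ok s) (hv : ¬ M.verifP i Ps s.v) :
      Step M (.verifP i (.mk j Ps)) σ (upd σ i CState.error)
  | verifA_ok {σ i j E s} (h : σ i = CState.ok s) (hv : M.verifA i E s.v) :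
      Step M (.verifA i (.mk j E)) σ
        (upd σ i (CState.ok ⟨s.v,
          s.pk ∪ {p | ∃ e ∈ E, p = PProp.eq e ∧ PProp.trust i j ∈ s.pk},
          s.pb, s.rcv⟩))
  | verifA_err {σ i j E s} (h : σ i = CState.ok s) (hv : ¬ M.verifA i E s.v) :
      Step M (.verifA i (.mk j E)) σ (upd σ i CState.error)
  | spot_ok {σ i j X n V E s} (h : σ i = CState.ok s)
      (hE : ∀ e ∈ E, EvEq M (fun _ => n) (updRef M s.v (.elem X n) (fun _ => V)) e) :
      Step M (.spotcheck i j X n V E) σ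
        (upd σ i (CState.ok ⟨updRef M s.v (.elem X n) (fun _ => V),
          s.pk, s.pb ∪ {p | ∃ e ∈ E, p = PProp.eq e}, s.rcv⟩))
  | spot_err {σ i j X n V E s} (h : σ i = CState.ok s)
      (hE : ¬ ∀ e ∈ E, EvEq M (fun _ => n) (updRef M s.v (.elem X n) (fun _ => V)) e) :
      Step M (.spotcheck i j X n V E) σ (upd σ i CState.error)

/-- The ground references occurring in a term. -/
inductive RefIn {S : Sig} (M : Model S) : Ref S → Term S → Prop
  | simple (X) : RefIn M (.var X) (.var (.simple X))
  | idxN (X n) : RefIn M (.elem X n) (.var (.idx X (.nat n)))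
  | idxI (X k) : RefIn M (.elem X 0) (.var (.idx X (.ivar k)))
  | app {f ts t r} : t ∈ ts → RefIn M r t → RefIn M r (.app f ts)
  | iter {f X n} : n < M.Range X → RefIn M (.elem X n) (.iter f X)

/-- Trace-consistency conditions for a single event: values are set at most
once (the previous value is ⊥); variables and properties are not used before
being received or computed; `compute` events of a component either are
contemplated by the architecture or respect the dependence relation `Dep_i`
(adversarial computations), and their input variables are all defined. -/
inductive EventOK {S : Sig} (M : Model S) (A : Arch S) (σ : GState S) : Event S → Prop
  | has {i r f s} : σ i = CState.ok s → AllBot M s.v r →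
      EventOK M A σ (.has i r f)
  | receive {i j ss rvs s} : σ i = CState.ok s →
      (∀ rv ∈ rvs, AllBot M s.v (Prod.fst rv)) →
      EventOK M A σ (.receive i j ss rvs)
  | compute {i r T s} : σ i = CState.ok s → AllBot M s.v r →
      (∀ r', RefIn M r' T → NoBot M s.v r') →
      (M.dep i r {r' | RefIn M r' T} ∨ ∃ α ∈ A, Inst (Event.compute i r T) α) →
      EventOK M A σ (.compute i r T)
  | check {i E s} : σ i = CState.ok s →
      (∀ e ∈ E, ∀ r, RefIn M r (Eqn.lhs e) ∨ RefIn M r (Eqn.rhs e) → NoBot M s.v r) →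
      EventOK M A σ (.check i E)
  | verifP {i p s} : σ i = CState.ok s → Stmt.pro p ∈ s.rcv →
      EventOK M A σ (.verifP i p)
  | verifA {i a s} : σ i = CState.ok s → Stmt.att a ∈ s.rcv →
      EventOK M A σ (.verifA i a)
  | spotcheck {i j X n V E s} : σ i = CState.ok s → s.v X n = none →
      EventOK M A σ (.spotcheck i j X n V E)

/-- Execution of a consistent trace: `Exec M A σ θ σ'` iff the trace `θ` is
consistent from `σ` and the iterated event semantics `S_T` maps `σ` to `σ'`. -/
inductive Exec {S : Sig} (M : Model S) (A : Arch S) :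
    GState S → List (Event S) → GState S → Prop
  | nil (σ) : Exec M A σ [] σ
  | cons {σ σ' σ'' e θ} : EventOK M A σ e → Step M e σ σ' → Exec M A σ' θ σ'' →
      Exec M A σ (e :: θ) σ''

/-- The semantics `S(A)` of an architecture: the set of states produced by
consistent traces compatible with `A`. -/
def SemA {S : Sig} (M : Model S) (A : Arch S) : Set (GState S) :=
  {σ | ∃ θ, Compatible A θ ∧ Exec M A (Init A) θ σ}

/-- `S_i(A)`: the states of `S(A)` that are well defined for component `C_i`. -/
def SemI {S : Sig} (M : Model S) (A : Arch S) (i : S.Comp) : Set (GState S) :=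
  {σ | σ ∈ SemA M A ∧ σ i ≠ CState.error}

/-- The ordering `σ ≥ σ'` on states derived from the prefix ordering on
compatible traces. -/
def GEi {S : Sig} (M : Model S) (A : Arch S) (σ σ' : GState S) : Prop :=
  ∃ θ θ', Compatible A θ ∧ Compatible A θ' ∧
    Exec M A (Init A) θ σ ∧ Exec M A (Init A) θ' σ' ∧ θ' <+: θ

/-- The properties of the architecture logic (Table 5). -/
inductive AProp (S : Sig) : Type
  | hasAll : S.Comp → Ref S → AProp S
  | hasNone : S.Comp → Ref S → AProp S
  | hasOne : S.Comp → Ref S → AProp S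
  | K : S.Comp → LEqn S → AProp S
  | B : S.Comp → LEqn S → AProp S
  | and : AProp S → AProp S → AProp S

/-- The semantics `S(φ)` of properties (Table 6): `Sat M A φ` iff `A ∈ S(φ)`. -/
def Sat {S : Sig} (M : Model S) (A : Arch S) : AProp S → Prop
  | .hasAll i r => ∃ σ ∈ SemA M A, ∃ s, σ i = CState.ok s ∧ NoBot M s.v r
  | .hasNone i r => ∀ σ ∈ SemA M A, ∀ s, σ i = CState.ok s → AllBot M s.v r
  | .hasOne i r => ∀ σ ∈ SemA M A, ∀ s, σ i = CState.ok s → AtMostOne M s.v r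
  | .K i e => ∀ σ' ∈ SemI M A i, ∃ σ ∈ SemI M A i, GEi M A σ σ' ∧
      ∃ s e', σ i = CState.ok s ∧ M.deduce i s.pk e' ∧ LImp M e' e
  | .B i e => ∀ σ' ∈ SemI M A i, ∃ σ ∈ SemI M A i, GEi M A σ σ' ∧
      ∃ s e1 e2, σ i = CState.ok s ∧ M.deduce i s.pb e1 ∧ M.deduce i s.pk e2 ∧
        LImp M (.and e1 e2) e
  | .and φ1 φ2 => Sat M A φ1 ∧ Sat M A φ2

/-- `C_i` is the owner (possessor or computer) of the variable `X` in `A`. -/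
def Owner {S : Sig} (A : Arch S) (i : S.Comp) (X : S.Var) : Prop :=
  (∃ tv, ArchRel.has i tv ∈ A ∧ TVar.base tv = X) ∨
  (∃ tv T, ArchRel.compute i tv T ∈ A ∧ TVar.base tv = X)

/-- `C_i` can receive or compute the variable `X` in `A`. -/
def CanGet {S : Sig} (A : Arch S) (i : S.Comp) (X : S.Var) : Prop :=
  Owner A i X ∨
  ∃ j ss tvs tv, ArchRel.receive i j ss tvs ∈ A ∧ tv ∈ tvs ∧ TVar.base tv = X

/-- The (base) variables occurring in a term. -/
inductive VarIn {S : Sig} : S.Var → Term S → Prop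
  | var (tv : TVar S) : VarIn tv.base (.var tv)
  | app {X f ts t} : t ∈ ts → VarIn X t → VarIn X (.app f ts)
  | iter (f X) : VarIn X (.iter f X)

/-- Consistency of architectures (the set `Γ`): each variable is possessed or
computed by a single component; a component cannot receive a variable from
two different sources; a component computing a variable or checking a property
can receive or compute all the necessary input variables; a component only
verifies statements that it can receive. -/
structure ArchConsistent {S : Sig} (M : Model S) (A : Arch S) : Prop where
  uniqueOwner : ∀ i i' X, Owner A i X → Owner A i' X → i = i'
  uniqueSender : ∀ i j j' ss ss' tvs tvs' tv tv',
    ArchRel.receive i j ss tvs ∈ A → ArchRel.receive i j' ss' tvs' ∈ A →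
    tv ∈ tvs → tv' ∈ tvs' → TVar.base tv = TVar.base tv' → j = j'
  computeInputs : ∀ i tv T X, ArchRel.compute i tv T ∈ A → VarIn X T → CanGet A i X
  checkInputs : ∀ i E X, ArchRel.check i E ∈ A → ∀ e ∈ E,
    (VarIn X (Eqn.lhs e) ∨ VarIn X (Eqn.rhs e)) → CanGet A i X
  verifPRecv : ∀ i p, ArchRel.verifP i p ∈ A →
    ∃ j ss tvs, ArchRel.receive i j ss tvs ∈ A ∧ Stmt.pro p ∈ ss
  verifARecv : ∀ i a, ArchRel.verifA i a ∈ A →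
    ∃ j ss tvs, ArchRel.receive i j ss tvs ∈ A ∧ Stmt.att a ∈ ss

/-- `MatchVar X̃ r`: the ground reference `r` is an instance of the (possibly
indexed) variable `X̃` (a variable indexed by an index variable covers the
whole array as well as each of its elements). -/
inductive MatchVar {S : Sig} : TVar S → Ref S → Prop
  | simple (X) : MatchVar (.simple X) (.var X)
  | nat (X n) : MatchVar (.idx X (.nat n)) (.elem X n)
  | ivarElem (X k n) : MatchVar (.idx X (.ivar k)) (.elem X n)
  | ivarAll (X k) : MatchVar (.idx X (.ivar k)) (.var X)

/-- Derivability of `Has_i^all` properties (rules H1, H2, H3, H5 and H7 of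
Table 7). -/
inductive DerivAll {S : Sig} (M : Model S) (A : Arch S) (i : S.Comp) : Ref S → Prop
  | H1 {tv r} : ArchRel.has i tv ∈ A → MatchVar tv r → DerivAll M A i r
  | H2 {j ss tvs tv r} : ArchRel.receive i j ss tvs ∈ A → tv ∈ tvs →
      MatchVar tv r → DerivAll M A i r
  | H3 {tv T r} : ArchRel.compute i tv T ∈ A → MatchVar tv r → DerivAll M A i r
  | H5 {r rs} : M.dep i r rs → (∀ r' ∈ rs, DerivAll M A i r') → DerivAll M A i r
  | H7 {X k} : DerivAll M A i (.var X) → k < M.Range X → DerivAll M A i (.elem X k)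

/-- None of the preconditions of rules H1, H2, H3 or H5 holds at `C_i` for the
variable `X` or any of its elements. -/
def NoOtherSrc {S : Sig} (M : Model S) (A : Arch S) (i : S.Comp) (X : S.Var) : Prop :=
  (∀ tv, ArchRel.has i tv ∈ A → TVar.base tv ≠ X) ∧
  (∀ j ss tvs tv, ArchRel.receive i j ss tvs ∈ A → tv ∈ tvs → TVar.base tv ≠ X) ∧
  (∀ tv T, ArchRel.compute i tv T ∈ A → TVar.base tv ≠ X) ∧
  (∀ r rs, Ref.base r = X → M.dep i r rs → ¬ (∀ r' ∈ rs, DerivAll M A i r'))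

/-- None of the preconditions of rules H1, H2, H3, H4 or H5 holds at `C_i` for
the variable `X` or any of its elements (precondition of rule H6). -/
def NoSource {S : Sig} (M : Model S) (A : Arch S) (i : S.Comp) (X : S.Var) : Prop :=
  NoOtherSrc M A i X ∧ ∀ j Y k E, ArchRel.spotcheck i j Y k E ∈ A → Y ≠ X

/-- The axiomatics of Table 7: `Deriv M A φ` iff `A ⊢ φ`. -/
inductive Deriv {S : Sig} (M : Model S) (A : Arch S) : AProp S → Prop
  | hasAllI {i r} : DerivAll M A i r → Deriv M A (.hasAll i r)
  | H4 {i j X k E} : ArchRel.spotcheck i j X k E ∈ A → Deriv M A (.hasOne i (.var X))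
  | H6 {i} (r : Ref S) : NoSource M A i (Ref.base r) → Deriv M A (.hasNone i r)
  | H8 {i X k} : Deriv M A (.hasNone i (.var X)) → k < M.Range X →
      Deriv M A (.hasNone i (.elem X k))
  | HNO {i r} : Deriv M A (.hasNone i r) → Deriv M A (.hasOne i r)
  | K1 {i tv T} : ArchRel.compute i tv T ∈ A →
      Deriv M A (.K i (.atom ⟨.var tv, .eq, T⟩))
  | K2 {i E e} : ArchRel.check i E ∈ A → e ∈ E → Deriv M A (.K i (.atom e))
  | K3 {i j Ps e} : ArchRel.verifP i (.mk j Ps) ∈ A → PItem.eq e ∈ Ps →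
      Deriv M A (.K i (.atom e))
  | K4 {i j Ps k E' e} : ArchRel.verifP i (.mk j Ps) ∈ A →
      PItem.att (.mk k E') ∈ Ps → ArchRel.trust i k ∈ A → e ∈ E' →
      Deriv M A (.K i (.atom e))
  | K5 {i j E e} : ArchRel.verifA i (.mk j E) ∈ A → ArchRel.trust i j ∈ A →
      e ∈ E → Deriv M A (.K i (.atom e))
  | Brule {i j X k E e} : ArchRel.spotcheck i j X k E ∈ A → e ∈ E →
      Deriv M A (.B i (.atom e))
  | KB {i e} : Deriv M A (.K i e) → Deriv M A (.B i e)
  | Kand {i e1 e2} : Deriv M A (.K i e1) → Deriv M A (.K i e2) →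
      Deriv M A (.K i (.and e1 e2))
  | Band {i e1 e2} : Deriv M A (.B i e1) → Deriv M A (.B i e2) →
      Deriv M A (.B i (.and e1 e2))
  | Kded {i e0} (E : Set (Eqn S)) : M.deduce i (PProp.eq '' E) e0 →
      (∀ e ∈ E, Deriv M A (.K i (.atom e))) → Deriv M A (.K i e0)
  | Bded {i e0} (E : Set (Eqn S)) : M.deduce i (PProp.eq '' E) e0 →
      (∀ e ∈ E, Deriv M A (.B i (.atom e))) → Deriv M A (.B i e0)
  | Iand {φ1 φ2} : Deriv M A φ1 → Deriv M A φ2 → Deriv M A (.and φ1 φ2)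


lemma instVar_base {S : Sig} (η : S.IVar → ℕ) (tv : TVar S) :
    (instVar η tv).base = tv.base := by
  cases tv with
  | simple => rfl
  | idx X k => cases k <;> rfl

lemma updRef_ne {S : Sig} (M : Model S) (w : VState S) (r : Ref S)
    (f : ℕ → S.Val) (X : S.Var) (hX : r.base ≠ X) (n : ℕ) :
    updRef M w r f X n = w X n := by
  cases r with
  | var Y =>
      have : X ≠ Y := fun h => hX h.symm
      simp [updRef, this]
  | elem Y m =>
      have : X ≠ Y := fun h => hX h.symm
      simp [updRef, this]

lemma foldl_updRef_ne {S : Sig} (M : Model S) (X : S.Var) :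
    ∀ (l : List (Ref S × (ℕ → S.Val))) (w : VState S),
      (∀ rv ∈ l, (Prod.fst rv).base ≠ X) → ∀ n,
      (l.foldl (fun w rv => updRef M w rv.1 rv.2) w) X n = w X n := by
  intro l
  induction l with
  | nil => intro w _ n; rfl
  | cons rv l ih =>
      intro w h n
      have h1 : (Prod.fst rv).base ≠ X := h rv List.mem_cons_self
      have h2 : ∀ rv' ∈ l, (Prod.fst rv').base ≠ X :=
        fun rv' hm => h rv' (List.mem_cons_of_mem _ hm)
      simp only [List.foldl_cons]
      rw [ih _ h2 n, updRef_ne M w rv.1 rv.2 X h1 n]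

lemma Exec.append {S : Sig} {M : Model S} {A : Arch S} :
    ∀ {σ0 σ1 σ2 : GState S} {θ1 θ2 : List (Event S)},
      Exec M A σ0 θ1 σ1 → Exec M A σ1 θ2 σ2 → Exec M A σ0 (θ1 ++ θ2) σ2 := by
  intro σ0 σ1 σ2 θ1 θ2 h1 h2
  induction h1 with
  | nil => simpa using h2
  | cons hok hstep _ ih => exact Exec.cons hok hstep (ih h2)

lemma compat_prefix {S : Sig} {A : Arch S} {θ1 θ2 : List (Event S)}
    (h : Compatible A (θ1 ++ θ2)) : Compatible A θ1 := by
  obtain ⟨hc, hs⟩ := h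
  constructor
  · intro e he hne
    exact hc e (List.mem_append_left _ he) hne
  · intro a b i j X n V E X' n' V' E' hab ha hb
    have la : (a : ℕ) < (θ1 ++ θ2).length := by
      simp only [List.length_append]; omega
    have lb : (b : ℕ) < (θ1 ++ θ2).length := by
      simp only [List.length_append]; omega
    refine hs ⟨a, la⟩ ⟨b, lb⟩ i j X n V E X' n' V' E' ?_ ?_ ?_
    · intro hEq
      exact hab (Fin.ext (by simpa using congrArg Fin.val hEq))
    · show (θ1 ++ θ2)[(a : ℕ)] = _
      rw [List.getElem_append_left a.isLt]; exact ha
    · show (θ1 ++ θ2)[(b : ℕ)] = _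
      rw [List.getElem_append_left b.isLt]; exact hb

lemma H6_inv {S : Sig} (M : Model S) (A : Arch S)
    (i : S.Comp) (X : S.Var)
    (h1 : ∀ tv, ArchRel.has i tv ∈ A → TVar.base tv ≠ X)
    (h2 : ∀ j ss tvs tv, ArchRel.receive i j ss tvs ∈ A → tv ∈ tvs →
      TVar.base tv ≠ X)
    (h3 : ∀ tv T, ArchRel.compute i tv T ∈ A → TVar.base tv ≠ X)
    (h4 : ∀ j Y k E, ArchRel.spotcheck i j Y k E ∈ A → Y ≠ X)
    (h5 : ∀ r rs, Ref.base r = X → M.dep i r rs →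
      ¬ ∀ r' ∈ rs, Sat M A (.hasAll i r')) :
    ∀ (θ θpre : List (Event S)) (σ σ'' : GState S),
      Compatible A (θpre ++ θ) → Exec M A (Init A) θpre σ → Exec M A σ θ σ'' →
      (∀ s, σ i = CState.ok s → ∀ n, s.v X n = none) →
      ∀ s, σ'' i = CState.ok s → ∀ n, s.v X n = none := by
  intro θ
  induction θ with
  | nil =>
      intro θpre σ σ'' _ _ hexec hinv
      cases hexec; exact hinv
  | cons e θ ih =>
      intro θpre σ σ'' hcompat hpre hexec hinv
      cases hexec with
      | @cons _ σ' _ _ _ hok hstep hrest =>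
        have hmem : e ∈ θpre ++ e :: θ :=
          List.mem_append_right _ List.mem_cons_self
        have hcompat' : Compatible A ((θpre ++ [e]) ++ θ) := by
          rw [List.append_assoc]; simpa using hcompat
        have hpre' : Exec M A (Init A) (θpre ++ [e]) σ' :=
          Exec.append hpre (Exec.cons hok hstep (Exec.nil _))
        refine ih (θpre ++ [e]) σ' σ'' hcompat' hpre' hrest ?_
        -- show the invariant for σ'
        clear ih hrest hpre' hcompat'
        cases hstep with
        | @has _ j r f s0 h =>
            intro s' hs' n
            simp only [upd] at hs'
            split_ifs at hs' with hij
            · subst hij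
              obtain ⟨α, hαA, hinst⟩ := hcompat.1 _ hmem (fun hf => hf)
              cases hinst with
              | @has _ tv _ η =>
                have hne : (instVar η tv).base ≠ X := by
                  rw [instVar_base]; exact h1 tv hαA
                injection hs' with hs'; subst hs'
                show updRef M s0.v (instVar η tv) f X n = none
                rw [updRef_ne M s0.v _ f X hne n]
                exact hinv s0 h n
            · exact hinv s' hs' n
        | @receive _ j j' ss rvs s0 h =>
            intro s' hs' n
            simp only [upd] at hs'
            split_ifs at hs' with hij
            · subst hij
              obtain ⟨α, hαA, hinst⟩ := hcompat.1 _ hmem (fun hf => hf)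
              cases hinst with
              | @receive _ _ _ tvs _ η hlen hcorr =>
                have hall : ∀ rv ∈ rvs, (Prod.fst rv).base ≠ X := by
                  intro rv hm
                  obtain ⟨p, hp, hpeq⟩ := List.mem_iff_getElem.1 hm
                  have hp' : p < tvs.length := by omega
                  have heq : Prod.fst rv = instVar η tvs[p] :=
                    hcorr p tvs[p] rv (List.getElem?_eq_getElem hp')
                      (by rw [List.getElem?_eq_getElem hp, hpeq])
                  rw [heq, instVar_base]
                  exact h2 j' ss tvs tvs[p] hαA (List.getElem_mem hp')
                injection hs' with hs'; subst hs'
                show (rvs.foldl (fun w rv => updRef M w rv.1 rv.2) s0.v) X n = none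
                rw [foldl_updRef_ne M X rvs s0.v hall n]
                exact hinv s0 h n
            · exact hinv s' hs' n
        | @compute _ j r T s0 val h hev =>
            intro s' hs' n
            simp only [upd] at hs'
            split_ifs at hs' with hij
            · subst hij
              injection hs' with hs'; subst hs'
              show updRef M s0.v r (fun _ => val) X n = none
              by_cases hbase : r.base = X
              · exfalso
                cases hok with
                | @compute _ _ _ s1 hσ1 hbot hnb hdisj =>
                  rw [h] at hσ1
                  injection hσ1 with h10; subst h10
                  cases hdisj with
                  | inl hdep =>
                      refine h5 r _ hbase hdep ?_
                      intro r' hr'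
                      exact ⟨σ, ⟨θpre, compat_prefix hcompat, hpre⟩, s0, h,
                        hnb r' hr'⟩
                  | inr hex =>
                      obtain ⟨α, hαA, hinst⟩ := hex
                      cases hinst with
                      | @compute _ tv T0 _ η hT =>
                        exact h3 tv T0 hαA (by rw [← instVar_base η tv]; exact hbase)
              · rw [updRef_ne M s0.v r _ X hbase n]
                exact hinv s0 h n
            · exact hinv s' hs' n
        | @check_ok _ j E s0 h hE =>
            intro s' hs' n
            simp only [upd] at hs'
            split_ifs at hs' with hij
            · subst hij
              injection hs' with hs'; subst hs'
              exact hinv s0 h n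
            · exact hinv s' hs' n
        | @check_err _ j E s0 h hE =>
            intro s' hs' n
            simp only [upd] at hs'
            split_ifs at hs' with hij
            exact hinv s' hs' n
        | @verifP_ok _ j j' Ps s0 h hv =>
            intro s' hs' n
            simp only [upd] at hs'
            split_ifs at hs' with hij
            · subst hij
              injection hs' with hs'; subst hs'
              exact hinv s0 h n
            · exact hinv s' hs' n
        | @verifP_err _ j j' Ps s0 h hv =>
            intro s' hs' n
            simp only [upd] at hs'
            split_ifs at hs' with hij
            exact hinv s' hs' n
        | @verifA_ok _ j j' E s0 h hv =>
            intro s' hs' n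
            simp only [upd] at hs'
            split_ifs at hs' with hij
            · subst hij
              injection hs' with hs'; subst hs'
              exact hinv s0 h n
            · exact hinv s' hs' n
        | @verifA_err _ j j' E s0 h hv =>
            intro s' hs' n
            simp only [upd] at hs'
            split_ifs at hs' with hij
            exact hinv s' hs' n
        | @spot_ok _ j j' Y n0 V E s0 h hE =>
            intro s' hs' n
            simp only [upd] at hs'
            split_ifs at hs' with hij
            · subst hij
              obtain ⟨α, hαA, hinst⟩ := hcompat.1 _ hmem (fun hf => hf)
              cases hinst with
              | @spotcheck _ _ _ k _ _ _ =>
                injection hs' with hs'; subst hs'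
                show updRef M s0.v (.elem Y n0) (fun _ => V) X n = none
                rw [updRef_ne M s0.v (Ref.elem Y n0) _ X (h4 j' Y k E hαA) n]
                exact hinv s0 h n
            · exact hinv s' hs' n
        | @spot_err _ j j' Y n0 V E s0 h hE =>
            intro s' hs' n
            simp only [upd] at hs'
            split_ifs at hs' with hij
            exact hinv s' hs' n

/-- Soundness of rule H6: if none of the preconditions of rules H1–H5 holds at
`C_i` for `X` or any `X_k` — no `Has_i`, no `Receive` carrying `X`, no
`Compute_i` of `X`, no `Spotcheck` on `X`, and no `Dep_i` whose input
variables `C_i` can all fully obtain — then `A ∈ S(Has_i^none(X̃))`: every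
state reached by a trace compatible with `A` satisfies `σ_i^v(X̃) = ⊥`. -/
theorem H6_sound {S : Sig} (M : Model S) (A : Arch S) (hA : ArchConsistent M A)
    (i : S.Comp) (X : S.Var)
    (h1 : ∀ tv, ArchRel.has i tv ∈ A → TVar.base tv ≠ X)
    (h2 : ∀ j ss tvs tv, ArchRel.receive i j ss tvs ∈ A → tv ∈ tvs →
      TVar.base tv ≠ X)
    (h3 : ∀ tv T, ArchRel.compute i tv T ∈ A → TVar.base tv ≠ X)
    (h4 : ∀ j Y k E, ArchRel.spotcheck i j Y k E ∈ A → Y ≠ X)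
    (h5 : ∀ r rs, Ref.base r = X → M.dep i r rs →
      ¬ ∀ r' ∈ rs, Sat M A (.hasAll i r'))
    (r : Ref S) (hr : Ref.base r = X) :
    Sat M A (.hasNone i r) := by
  intro σ hσ s hs
  obtain ⟨θ, hcomp, hexec⟩ := hσ
  have key : ∀ n, s.v X n = none := by
    refine H6_inv M A i X h1 h2 h3 h4 h5 θ [] (Init A) σ
      (by simpa using hcomp) (Exec.nil _) hexec ?_ s hs
    intro s0 h0 n
    have : (CState.ok ⟨fun _ _ => none,
        {p | ∃ j, p = PProp.trust i j ∧ ArchRel.trust i j ∈ A}, ∅, ∅⟩ : CState S)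
        = CState.ok s0 := h0
    injection this with h0'
    rw [← h0']
  cases r with
  | var Y =>
      have : Y = X := hr
      subst this
      intro k _
      exact key k
  | elem Y m =>
      have : Y = X := hr
      subst this
      exact key m

end PrivacyArch
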